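/- Let W be a Coxeter group, ≡ an essential semilattice congruence on the left weak order of W with finitely many congruence classes, say K classes, and S_≡ the associated Coxeter stack-sorting operator S_≡(w) = w·(π_↓(w))⁻¹. Then the identity element e has exactly K preimages under S_≡, and every element v ≠ e has at most K − 1 preimages. -/

import Mathlib

/-- If an essential semilattice congruence on the left weak order of a Coxeter
group has exactly `K` congruence classes, then the identity has exactly `K` preimages under
the Coxeter stack-sorting operator `S_≡(w) = w * (π_↓ w)⁻¹`, and every other element has at
most `K - 1` preimages. -/
theorem stmt_5 {B W : Type*} [Group W] {M : CoxeterMatrix B} (cs : CoxeterSystem M W)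
    (lL : W → W → Prop) (hlL : ∀ x y, lL x y ↔ cs.length (y * x⁻¹) + cs.length x = cs.length y)
    (inf : W → W → W)
    (hinf : ∀ x y, lL (inf x y) x ∧ lL (inf x y) y ∧ ∀ z, lL z x → lL z y → lL z (inf x y))
    (r : W → W → Prop) (hequiv : Equivalence r)
    (hcong : ∀ x1 x2 y1 y2, r x1 x2 → r y1 y2 → r (inf x1 y1) (inf x2 y2))
    (hess : ∀ x, r x 1 → x = 1)
    (pd : W → W) (hpd : ∀ w, r (pd w) w ∧ ∀ u, r u w → lL (pd w) u)
    -- there are exactly `K` congruence classes, and `K` is finite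
    (K : ℕ) (hfin : Finite (Quot r)) (hK : Nat.card (Quot r) = K) :
    Nat.card {w : W // w * (pd w)⁻¹ = 1} = K ∧
      ∀ v : W, v ≠ 1 → Nat.card {w : W // w * (pd w)⁻¹ = v} ≤ K - 1 := by
  -- antisymmetry of lL
  have hanti : ∀ x y, lL x y → lL y x → x = y := by
    intro x y hxy hyx
    rw [hlL] at hxy hyx
    have h0 : cs.length (x * y⁻¹) = 0 := by omega
    have := cs.length_eq_zero_iff.mp h0
    exact mul_inv_eq_one.mp this
  -- pd is idempotent
  have hpdpd : ∀ w, pd (pd w) = pd w := by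
    intro w
    apply hanti
    · exact (hpd (pd w)).2 (pd w) (hequiv.refl _)
    · exact (hpd w).2 (pd (pd w)) (hequiv.trans (hpd (pd w)).1 (hpd w).1)
  have hpd1 : pd 1 = 1 := hess _ (hpd 1).1
  -- minimal elements of equivalent classes coincide
  have hmin : ∀ w w', pd w = w → pd w' = w' → r w w' → w = w' := by
    intro w w' hw hw' hr
    apply hanti
    · have := (hpd w).2 w' (hequiv.symm hr); rwa [hw] at this
    · have := (hpd w').2 w hr; rwa [hw'] at this
  -- preimages of 1 are fixed points of pd
  have key : ∀ w : W, w * (pd w)⁻¹ = 1 ↔ pd w = w := by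
    intro w; rw [mul_inv_eq_one]; exact eq_comm
  -- the set of minimal elements
  set A : Set W := {u | pd u = u} with hAdef
  have h1A : (1 : W) ∈ A := hpd1
  -- bijection between A and Quot r
  have hbij : Function.Bijective (fun u : A => Quot.mk r (u : W)) := by
    constructor
    · rintro ⟨u, hu⟩ ⟨u', hu'⟩ h
      have hr : r u u' := (hequiv.eqvGen_iff).mp (Quot.eqvGen_exact h)
      exact Subtype.ext (hmin u u' hu hu' hr)
    · intro q
      induction q using Quot.ind with
      | _ w => exact ⟨⟨pd w, hpdpd w⟩, Quot.sound (hpd w).1⟩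
  have hAcard : Nat.card A = K := by
    rw [Nat.card_eq_of_bijective _ hbij, hK]
  have hAfin : A.Finite := by
    rw [← Set.finite_coe_iff]
    exact Finite.of_injective _ hbij.1
  constructor
  · rw [← hAcard]
    apply Nat.card_congr
    exact Equiv.subtypeEquivRight key
  · intro v hv
    -- inject the fiber over v into A \ {1}
    have hAdfin : Finite ↥(A \ {1}) := (Set.Finite.diff hAfin : (A \ {1}).Finite).to_subtype
    have hinj : Function.Injective
        (fun w : {w : W // w * (pd w)⁻¹ = v} => (⟨pd (w : W), by
          refine ⟨hpdpd _, ?_⟩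
          intro h
          simp only [Set.mem_singleton_iff] at h
          have hw1 : (w : W) = 1 := hess _ (hequiv.symm (h ▸ (hpd (w : W)).1))
          apply hv
          have := w.2
          rw [hw1] at this
          rw [hpd1, inv_one, mul_one] at this
          exact this.symm
          ⟩ : ↥(A \ {1}))) := by
      rintro ⟨w, hw⟩ ⟨w', hw'⟩ h
      simp only [Subtype.mk.injEq] at h ⊢
      have e1 : w = v * pd w := by
        rw [mul_inv_eq_iff_eq_mul] at hw; exact hw
      have e2 : w' = v * pd w' := by
        rw [mul_inv_eq_iff_eq_mul] at hw'; exact hw'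
      rw [e1, e2, show pd w = pd w' from congrArg Subtype.val h]
    calc Nat.card {w : W // w * (pd w)⁻¹ = v} ≤ Nat.card ↥(A \ {1}) :=
          Nat.card_le_card_of_injective _ hinj
      _ = (A \ {1}).ncard := Nat.card_coe_set_eq _
      _ = A.ncard - 1 := Set.ncard_diff_singleton_of_mem h1A
      _ = K - 1 := by rw [← Nat.card_coe_set_eq, hAcard]
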